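/- For all real x with 0 < x < π/2, the following double inequality holds: (2 + cos x)/3 − (2/3 − 2/π)·Φ₁(x) < (sin x)/x < (2 + cos x)/3 − (2/3 − 2/π)·Ψ₂(x). -/

import Mathlib

open Real Set


lemma updown_pos {f : ℝ → ℝ} {a c : ℝ} (hc0 : 0 < c) (hca : c ≤ a)
    (hf : ContinuousOn f (Icc 0 a)) (hf0 : f 0 = 0) (hfa : 0 ≤ f a)
    (h1 : ∀ x ∈ Ioo 0 c, 0 < deriv f x)
    (h2 : ∀ x ∈ Ioo c a, deriv f x < 0) :
    ∀ x ∈ Ioo 0 a, 0 < f x := by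
  have hmono : StrictMonoOn f (Icc 0 c) := by
    apply strictMonoOn_of_deriv_pos (convex_Icc 0 c)
      (hf.mono (Icc_subset_Icc le_rfl hca))
    rwa [interior_Icc]
  have hanti : StrictAntiOn f (Icc c a) := by
    apply strictAntiOn_of_deriv_neg (convex_Icc c a)
      (hf.mono (Icc_subset_Icc hc0.le le_rfl))
    rwa [interior_Icc]
  intro x hx
  rcases le_or_gt x c with h | h
  · have := hmono ⟨le_rfl, hc0.le⟩ ⟨hx.1.le, h⟩ hx.1
    rwa [hf0] at this
  · have := hanti ⟨h.le, hx.2.le⟩ ⟨hca, le_rfl⟩ hx.2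
    linarith

lemma sp_step {f g : ℝ → ℝ} {a c : ℝ} (hc0 : 0 < c) (hca : c ≤ a)
    (hf : ContinuousOn f (Icc 0 a)) (hf0 : f 0 = 0) (hfa : f a < 0)
    (hderiv : ∀ x ∈ Ioo 0 a, deriv f x = g x)
    (h1 : ∀ x ∈ Ioo 0 c, 0 < g x) (h2 : ∀ x ∈ Ioo c a, g x < 0) :
    ∃ d, 0 < d ∧ d ≤ a ∧ (∀ x ∈ Ioo 0 d, 0 < f x) ∧ (∀ x ∈ Ioo d a, f x < 0) := by
  have hmono : StrictMonoOn f (Icc 0 c) := by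
    apply strictMonoOn_of_deriv_pos (convex_Icc 0 c)
      (hf.mono (Icc_subset_Icc le_rfl hca))
    intro x hx
    rw [interior_Icc] at hx
    rw [hderiv x ⟨hx.1, lt_of_lt_of_le hx.2 hca⟩]
    exact h1 x hx
  have hanti : StrictAntiOn f (Icc c a) := by
    apply strictAntiOn_of_deriv_neg (convex_Icc c a)
      (hf.mono (Icc_subset_Icc hc0.le le_rfl))
    intro x hx
    rw [interior_Icc] at hx
    rw [hderiv x ⟨hc0.trans hx.1, hx.2⟩]
    exact h2 x hx
  have hclta : c < a := by
    rcases eq_or_lt_of_le hca with rfl | h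
    · exfalso
      have := hmono ⟨le_rfl, hc0.le⟩ ⟨hc0.le, le_rfl⟩ hc0
      rw [hf0] at this; linarith
    · exact h
  have hfc : 0 < f c := by
    have := hmono ⟨le_rfl, hc0.le⟩ ⟨hc0.le, le_rfl⟩ hc0
    rwa [hf0] at this
  -- IVT on [c,a]
  have hsub : Ioo (f a) (f c) ⊆ f '' Ioo c a :=
    intermediate_value_Ioo' hclta.le (hf.mono (Icc_subset_Icc hc0.le le_rfl))
  obtain ⟨d, hd, hfd⟩ := hsub ⟨hfa, hfc⟩
  refine ⟨d, hc0.trans hd.1, hd.2.le, ?_, ?_⟩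
  · intro y hy
    rcases le_or_gt y c with h | h
    · have := hmono ⟨le_rfl, hc0.le⟩ ⟨hy.1.le, h⟩ hy.1
      rwa [hf0] at this
    · have := hanti ⟨h.le, (hy.2.trans hd.2).le⟩ ⟨hd.1.le, hd.2.le⟩ hy.2
      rwa [hfd] at this
  · intro y hy
    have := hanti ⟨hd.1.le, hd.2.le⟩ ⟨(hd.1.trans hy.1).le, hy.2.le⟩ hy.1
    rwa [hfd] at this

noncomputable def Gf (l x : ℝ) : ℝ := sin x - x*(2+cos x)/3 + l*(x^2 - x*sin x)
noncomputable def Gf1 (l x : ℝ) : ℝ := (2*cos x - 2)/3 + x*sin x/3 + l*(2*x - sin x - x*cos x)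
noncomputable def Gf2 (l x : ℝ) : ℝ := (x*cos x - sin x)/3 + l*(2 - 2*cos x + x*sin x)
noncomputable def Gf3 (l x : ℝ) : ℝ := -(x*sin x)/3 + l*(3*sin x + x*cos x)

lemma hasDerivAt_Gf (l x : ℝ) : HasDerivAt (Gf l) (Gf1 l x) x := by
  have h := ((Real.hasDerivAt_sin x).sub
      (((hasDerivAt_id x).mul ((hasDerivAt_const x 2).add (Real.hasDerivAt_cos x))).div_const 3)).add
      (((hasDerivAt_pow 2 x).sub ((hasDerivAt_id x).mul (Real.hasDerivAt_sin x))).const_mul l)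
  refine h.congr_deriv ?_
  unfold Gf1; simp only [id_eq, Pi.add_apply, Pi.sub_apply, Pi.mul_apply, Pi.pow_apply]; push_cast; ring

lemma hasDerivAt_Gf1 (l x : ℝ) : HasDerivAt (Gf1 l) (Gf2 l x) x := by
  have h := ((((Real.hasDerivAt_cos x).const_mul 2).sub (hasDerivAt_const x 2)).div_const 3 |>.add
      (((hasDerivAt_id x).mul (Real.hasDerivAt_sin x)).div_const 3)).add
      ((((hasDerivAt_id x).const_mul 2).sub (Real.hasDerivAt_sin x) |>.sub
        ((hasDerivAt_id x).mul (Real.hasDerivAt_cos x))).const_mul l)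
  refine h.congr_deriv ?_
  unfold Gf2; simp only [id_eq, Pi.add_apply, Pi.sub_apply, Pi.mul_apply, Pi.pow_apply]; ring

lemma hasDerivAt_Gf2 (l x : ℝ) : HasDerivAt (Gf2 l) (Gf3 l x) x := by
  have h := ((((hasDerivAt_id x).mul (Real.hasDerivAt_cos x)).sub (Real.hasDerivAt_sin x)).div_const 3).add
      ((((hasDerivAt_const x 2).sub ((Real.hasDerivAt_cos x).const_mul 2)).add
        ((hasDerivAt_id x).mul (Real.hasDerivAt_sin x))).const_mul l)
  refine h.congr_deriv ?_
  unfold Gf3; simp only [id_eq, Pi.add_apply, Pi.sub_apply, Pi.mul_apply, Pi.pow_apply]; ring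

lemma lam_bounds : 0.05 < (2/3 - 2/π)/(π/2-1) ∧ (2/3 - 2/π)/(π/2-1) < 0.053 := by
  have h1 := pi_gt_d6
  have h2 := pi_lt_d6
  have hπ : (0:ℝ) < π := by linarith
  have hd : (0:ℝ) < π/2 - 1 := by linarith
  constructor
  · rw [lt_div_iff₀ hd]
    rw [show (2/3 - 2/π : ℝ) = (2*π/3 - 2)/π by field_simp]
    rw [lt_div_iff₀ hπ]
    nlinarith
  · rw [div_lt_iff₀ hd]
    rw [show (2/3 - 2/π : ℝ) = (2*π/3 - 2)/π by field_simp]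
    rw [div_lt_iff₀ hπ]
    nlinarith

lemma k_bounds : 0.0300 < 2/3 - 2/π ∧ 2/3 - 2/π < 0.0301 := by
  have h1 := pi_gt_d6
  have h2 := pi_lt_d6
  have hπ : (0:ℝ) < π := by linarith
  constructor
  · rw [show (2/3 - 2/π : ℝ) = (2*π/3 - 2)/π by field_simp]
    rw [lt_div_iff₀ hπ]; nlinarith
  · rw [show (2/3 - 2/π : ℝ) = (2*π/3 - 2)/π by field_simp]
    rw [div_lt_iff₀ hπ]; nlinarith

noncomputable def hf (l x : ℝ) : ℝ := 3*l - x/3 + l*(x*cos x/sin x)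

lemma hasDerivAt_hf (l x : ℝ) (hs : sin x ≠ 0) :
    HasDerivAt (hf l) (-(1/3) + l*((sin x*cos x - x)/(sin x)^2)) x := by
  have h := ((hasDerivAt_const x (3*l)).sub ((hasDerivAt_id x).div_const 3)).add
      ((((hasDerivAt_id x).mul (Real.hasDerivAt_cos x)).div (Real.hasDerivAt_sin x) hs).const_mul l)
  refine h.congr_deriv ?_
  simp only [id_eq, Pi.add_apply, Pi.sub_apply, Pi.mul_apply, Pi.pow_apply]
  have key : ((1:ℝ)*cos x + x * -sin x) * sin x - x*cos x*cos x = sin x*cos x - x := by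
    linear_combination (-x) * sin_sq_add_cos_sq x
  rw [key]; ring

lemma sp_Gf3 {l : ℝ} (hl1 : 0.05 < l) (hl2 : l < 0.053) :
    ∃ c, 0 < c ∧ c ≤ π/2 ∧ (∀ x ∈ Ioo 0 c, 0 < Gf3 l x) ∧
      (∀ x ∈ Ioo c (π/2), Gf3 l x < 0) := by
  have hpi1 := pi_gt_d6
  have hpi2 := pi_lt_d6
  have hsinpos : ∀ x ∈ Ioc (0:ℝ) (π/2), 0 < sin x := by
    intro x hx
    exact sin_pos_of_pos_of_lt_pi hx.1 (by linarith [hx.2])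
  have hcont : ContinuousOn (hf l) (Ioc 0 (π/2)) := by
    unfold hf
    refine (continuousOn_const.sub (continuousOn_id.div_const 3)).add
      (continuousOn_const.mul (((continuousOn_id.mul Real.continuous_cos.continuousOn).div
        Real.continuous_sin.continuousOn ?_)))
    intro x hx
    exact (hsinpos x hx).ne'
  have hanti : StrictAntiOn (hf l) (Ioc 0 (π/2)) := by
    apply strictAntiOn_of_deriv_neg (convex_Ioc 0 (π/2)) hcont
    intro x hx
    rw [interior_Ioc] at hx
    have hs : sin x ≠ 0 := (hsinpos x ⟨hx.1, hx.2.le⟩).ne'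
    rw [(hasDerivAt_hf l x hs).deriv]
    have h2x : sin (2*x) < 2*x := sin_lt (by linarith [hx.1])
    have hsc : sin x * cos x < x := by
      rw [sin_two_mul] at h2x; linarith
    have : l * ((sin x*cos x - x)/(sin x)^2) ≤ 0 := by
      apply mul_nonpos_of_nonneg_of_nonpos (by linarith)
      apply div_nonpos_of_nonpos_of_nonneg (by linarith) (sq_nonneg _)
    linarith
  have h03 : (0.3:ℝ) ∈ Ioc (0:ℝ) (π/2) := ⟨by norm_num, by linarith⟩
  have hpi2mem : (π/2:ℝ) ∈ Ioc (0:ℝ) (π/2) := ⟨by linarith, le_rfl⟩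
  have hval03 : 0 < hf l 0.3 := by
    unfold hf
    have hc : 0 < cos (0.3:ℝ) := cos_pos_of_mem_Ioo ⟨by linarith, by linarith⟩
    have hs : 0 < sin (0.3:ℝ) := hsinpos 0.3 h03
    have : 0 ≤ l * (0.3*cos 0.3/sin 0.3) := by positivity
    linarith
  have hvalpi : hf l (π/2) < 0 := by
    unfold hf
    rw [Real.cos_pi_div_two, Real.sin_pi_div_two]
    norm_num
    linarith
  -- IVT
  have hsub : Ioo (hf l (π/2)) (hf l 0.3) ⊆ hf l '' Ioo 0.3 (π/2) :=
    intermediate_value_Ioo' (by linarith) (hcont.mono (fun y hy => ⟨by linarith [hy.1], hy.2⟩))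
  obtain ⟨c, hc, hfc⟩ := hsub ⟨hvalpi, hval03⟩
  have hcmem : c ∈ Ioc (0:ℝ) (π/2) := ⟨by linarith [hc.1], hc.2.le⟩
  refine ⟨c, by linarith [hc.1], hc.2.le, ?_, ?_⟩
  · intro y hy
    have hymem : y ∈ Ioc (0:ℝ) (π/2) := ⟨hy.1, by linarith [hy.2, hc.2]⟩
    have hhy : 0 < hf l y := by
      have := hanti hymem hcmem hy.2
      rwa [hfc] at this
    have hsy : 0 < sin y := hsinpos y hymem
    have : Gf3 l y = sin y * hf l y := by
      unfold Gf3 hf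
      field_simp
      ring
    rw [this]
    positivity
  · intro y hy
    have hymem : y ∈ Ioc (0:ℝ) (π/2) := ⟨by linarith [hy.1, hc.1], hy.2.le⟩
    have hhy : hf l y < 0 := by
      have := hanti hcmem hymem hy.1
      rwa [hfc] at this
    have hsy : 0 < sin y := hsinpos y hymem
    have heq : Gf3 l y = sin y * hf l y := by
      unfold Gf3 hf
      field_simp
      ring
    rw [heq]
    exact mul_neg_of_pos_of_neg hsy hhy

lemma lower_bound (x : ℝ) (hx : 0 < x) (hx' : x < π / 2) :
    (2 + cos x) / 3 - (2 / 3 - 2 / π) * ((π / 2 - 1)⁻¹ * (x - sin x)) < sin x / x := by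
  have hpi1 := pi_gt_d6
  have hpi2 := pi_lt_d6
  have h2 : π/2 - 1 ≠ 0 := by intro h; nlinarith
  set l : ℝ := (2/3 - 2/π)/(π/2-1) with hl_def
  obtain ⟨hl1, hl2⟩ := lam_bounds
  rw [← hl_def] at hl1 hl2
  obtain ⟨c, hc0, hca, hc1, hc2⟩ := sp_Gf3 hl1 hl2
  have hd2 : ∀ y ∈ Ioo (0:ℝ) (π/2), deriv (Gf2 l) y = Gf3 l y :=
    fun y _ => (hasDerivAt_Gf2 l y).deriv
  have hcont2 : ContinuousOn (Gf2 l) (Icc 0 (π/2)) := by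
    apply Continuous.continuousOn; unfold Gf2; fun_prop
  have h20 : Gf2 l 0 = 0 := by unfold Gf2; simp
  have h2a : Gf2 l (π/2) < 0 := by
    unfold Gf2
    rw [Real.cos_pi_div_two, Real.sin_pi_div_two]
    nlinarith
  obtain ⟨d, hd0, hda, hd1', hd2'⟩ := sp_step hc0 hca hcont2 h20 h2a hd2 hc1 hc2
  have hder1 : ∀ y ∈ Ioo (0:ℝ) (π/2), deriv (Gf1 l) y = Gf2 l y :=
    fun y _ => (hasDerivAt_Gf1 l y).deriv
  have hcont1 : ContinuousOn (Gf1 l) (Icc 0 (π/2)) := by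
    apply Continuous.continuousOn; unfold Gf1; fun_prop
  have h10 : Gf1 l 0 = 0 := by unfold Gf1; simp
  have h1a : Gf1 l (π/2) < 0 := by
    unfold Gf1
    rw [Real.cos_pi_div_two, Real.sin_pi_div_two]
    nlinarith
  obtain ⟨e, he0, hea, he1', he2'⟩ := sp_step hd0 hda hcont1 h10 h1a hder1 hd1' hd2'
  have hder0 : ∀ y ∈ Ioo (0:ℝ) (π/2), deriv (Gf l) y = Gf1 l y :=
    fun y _ => (hasDerivAt_Gf l y).deriv
  have hcont0 : ContinuousOn (Gf l) (Icc 0 (π/2)) := by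
    apply Continuous.continuousOn; unfold Gf; fun_prop
  have h00 : Gf l 0 = 0 := by unfold Gf; simp
  have h0a : Gf l (π/2) = 0 := by
    unfold Gf
    rw [Real.cos_pi_div_two, Real.sin_pi_div_two]
    have hid : l * ((π/2)^2 - π/2*1) = π/3 - 1 := by
      rw [hl_def, div_mul_eq_mul_div, div_eq_iff h2]
      field_simp
    rw [hid]; ring
  have hup : ∀ y ∈ Ioo (0:ℝ) e, 0 < deriv (Gf l) y := by
    intro y hy
    rw [hder0 y ⟨hy.1, lt_of_lt_of_le hy.2 hea⟩]
    exact he1' y hy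
  have hdn : ∀ y ∈ Ioo e (π/2), deriv (Gf l) y < 0 := by
    intro y hy
    rw [hder0 y ⟨he0.trans hy.1, hy.2⟩]
    exact he2' y hy
  have hpos := updown_pos he0 hea hcont0 h00 (le_of_eq h0a.symm) hup hdn x ⟨hx, hx'⟩
  have hxne : x ≠ 0 := hx.ne'
  have key : sin x / x - ((2 + cos x) / 3 - (2 / 3 - 2 / π) * ((π / 2 - 1)⁻¹ * (x - sin x)))
      = Gf l x / x := by
    rw [hl_def]; unfold Gf
    field_simp
    ring
  have hq : 0 < Gf l x / x := div_pos hpos hx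
  linarith [key ▸ hq]

noncomputable def Vf (k x : ℝ) : ℝ := x*(2+cos x)/3 - k*x*(sin x - x*cos x)^2 - sin x
noncomputable def Vf2 (k x : ℝ) : ℝ := (sin x - x*cos x)/3 - 6*k*x*sin x*(sin x - x*cos x)
  - 2*k*x^2*cos x*(sin x - x*cos x) - 2*k*x^3*(sin x)^2
noncomputable def Vf1 (k x : ℝ) : ℝ := (2 - 2*cos x - x*sin x)/3 - k*(sin x - x*cos x)^2
  - 2*k*x^2*sin x*(sin x - x*cos x)
lemma hasDerivAt_t (x : ℝ) : HasDerivAt (fun y => sin y - y*cos y) (x*sin x) x := by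
  have h := (Real.hasDerivAt_sin x).sub ((hasDerivAt_id x).mul (Real.hasDerivAt_cos x))
  refine h.congr_deriv ?_
  simp only [id_eq]; ring

lemma hasDerivAt_Vf (k x : ℝ) : HasDerivAt (Vf k) (Vf1 k x) x := by
  have h1 := ((hasDerivAt_id x).mul ((hasDerivAt_const x (2:ℝ)).add (Real.hasDerivAt_cos x))).div_const 3
  have h2 := (((hasDerivAt_const x k).mul (hasDerivAt_id x)).mul ((hasDerivAt_t x).pow 2))
  have h := (h1.sub h2).sub (Real.hasDerivAt_sin x)
  convert h using 1
  all_goals first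
    | (funext y; unfold Vf; simp only [id_eq, Pi.add_apply, Pi.sub_apply, Pi.mul_apply, Pi.pow_apply]; ring)
    | (unfold Vf1; simp only [id_eq, Pi.add_apply, Pi.sub_apply, Pi.mul_apply, Pi.pow_apply]; push_cast; ring)
    | rfl

lemma hasDerivAt_Vf1 (k x : ℝ) : HasDerivAt (Vf1 k) (Vf2 k x) x := by
  have h1 := (((hasDerivAt_const x (2:ℝ)).sub ((Real.hasDerivAt_cos x).const_mul 2)).sub
      ((hasDerivAt_id x).mul (Real.hasDerivAt_sin x))).div_const 3
  have h2 := ((hasDerivAt_t x).pow 2).const_mul k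
  have h3 := (((hasDerivAt_pow 2 x).mul (Real.hasDerivAt_sin x)).mul (hasDerivAt_t x)).const_mul (2*k)
  have h := (h1.sub h2).sub h3
  convert h using 1
  all_goals first
    | (funext y; unfold Vf1; simp only [id_eq, Pi.add_apply, Pi.sub_apply, Pi.mul_apply, Pi.pow_apply]; ring)
    | (unfold Vf2; simp only [id_eq, Pi.add_apply, Pi.sub_apply, Pi.mul_apply, Pi.pow_apply]; push_cast; ring)
    | rfl



noncomputable def Af (k x : ℝ) : ℝ := 1/3 - 6*k*x*sin x - 2*k*x^2*cos x
noncomputable def uf (x : ℝ) : ℝ := (sin x - x*cos x)/x^3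
noncomputable def Df (k x : ℝ) : ℝ := uf x * Af k x / (sin x)^2 - 2*k

lemma hasDerivAt_t' (x : ℝ) : HasDerivAt (fun y => sin y - y*cos y) (x*sin x) x := by
  have h := (Real.hasDerivAt_sin x).sub ((hasDerivAt_id x).mul (Real.hasDerivAt_cos x))
  refine h.congr_deriv ?_
  simp only [id_eq]; ring

lemma sin_pos' : ∀ x ∈ Ioc (0:ℝ) (π/2), 0 < sin x := by
  intro x hx
  exact sin_pos_of_pos_of_lt_pi hx.1 (by nlinarith [pi_gt_d6, hx.2])

lemma cos_pos' : ∀ x ∈ Ioo (0:ℝ) (π/2), 0 < cos x := by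
  intro x hx
  exact cos_pos_of_mem_Ioo ⟨by nlinarith [pi_gt_d6, hx.1], hx.2⟩

lemma t_pos : ∀ x ∈ Ioc (0:ℝ) (π/2), 0 < sin x - x*cos x := by
  have hmono : StrictMonoOn (fun y => sin y - y*cos y) (Icc 0 (π/2)) := by
    apply strictMonoOn_of_deriv_pos (convex_Icc 0 (π/2))
    · apply Continuous.continuousOn; fun_prop
    · intro y hy
      rw [interior_Icc] at hy
      rw [(hasDerivAt_t' y).deriv]
      exact mul_pos hy.1 (sin_pos' y ⟨hy.1, hy.2.le⟩)
  intro x hx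
  have := hmono ⟨le_rfl, by linarith [hx.1, hx.2]⟩ ⟨hx.1.le, hx.2⟩ hx.1
  simpa using this

lemma g_neg : ∀ x ∈ Ioc (0:ℝ) (π/2), x^2*sin x - 3*(sin x - x*cos x) < 0 := by
  have hanti : StrictAntiOn (fun y => y^2*sin y - 3*(sin y - y*cos y)) (Icc 0 (π/2)) := by
    apply strictAntiOn_of_deriv_neg (convex_Icc 0 (π/2))
    · apply Continuous.continuousOn; fun_prop
    · intro y hy
      rw [interior_Icc] at hy
      have hd : HasDerivAt (fun y => y^2*sin y - 3*(sin y - y*cos y))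
          (y^2*cos y - y*sin y) y := by
        have h := ((hasDerivAt_pow 2 y).mul (Real.hasDerivAt_sin y)).sub
          ((hasDerivAt_t' y).const_mul 3)
        refine h.congr_deriv ?_
        push_cast; ring
      rw [hd.deriv]
      have ht := t_pos y ⟨hy.1, hy.2.le⟩
      nlinarith [hy.1]
  intro x hx
  have := hanti ⟨le_rfl, by linarith [hx.1, hx.2]⟩ ⟨hx.1.le, hx.2⟩ hx.1
  simpa using this

lemma hasDerivAt_uf (x : ℝ) (hx : x ≠ 0) :
    HasDerivAt uf ((x^2*sin x - 3*(sin x - x*cos x))/x^4) x := by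
  have h := (hasDerivAt_t' x).div (hasDerivAt_pow 3 x) (pow_ne_zero 3 hx)
  refine h.congr_deriv ?_
  rw [div_eq_div_iff (by positivity) (by positivity)]
  push_cast; ring

lemma uf_anti : StrictAntiOn uf (Ioc (0:ℝ) (π/2)) := by
  apply strictAntiOn_of_deriv_neg (convex_Ioc 0 (π/2))
  · unfold uf
    apply ContinuousOn.div
    · apply Continuous.continuousOn; fun_prop
    · apply Continuous.continuousOn; fun_prop
    · intro y hy; exact pow_ne_zero 3 hy.1.ne'
  · intro y hy
    rw [interior_Ioc] at hy
    rw [(hasDerivAt_uf y hy.1.ne').deriv]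
    exact div_neg_of_neg_of_pos (g_neg y ⟨hy.1, hy.2.le⟩) (pow_pos hy.1 4)

lemma uf_pos : ∀ x ∈ Ioc (0:ℝ) (π/2), 0 < uf x := by
  intro x hx
  unfold uf
  exact div_pos (t_pos x hx) (pow_pos hx.1 3)

lemma hasDerivAt_Af (k x : ℝ) : HasDerivAt (Af k)
    (2*k*(x^2*sin x - 3*sin x - 5*x*cos x)) x := by
  have h := ((hasDerivAt_const x (1/3:ℝ)).sub
      (((hasDerivAt_id x).mul (Real.hasDerivAt_sin x)).const_mul (6*k))).sub
      (((hasDerivAt_pow 2 x).mul (Real.hasDerivAt_cos x)).const_mul (2*k))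
  convert h using 1
  all_goals first
    | (funext y; unfold Af; simp only [id_eq, Pi.add_apply, Pi.sub_apply, Pi.mul_apply, Pi.pow_apply]; ring)
    | (simp only [id_eq, Pi.add_apply, Pi.sub_apply, Pi.mul_apply, Pi.pow_apply]; push_cast; ring)
    | rfl

lemma Af_anti {k : ℝ} (hk : 0 < k) : StrictAntiOn (Af k) (Icc (0:ℝ) (π/2)) := by
  apply strictAntiOn_of_deriv_neg (convex_Icc 0 (π/2))
  · apply Continuous.continuousOn; unfold Af; fun_prop
  · intro y hy
    rw [interior_Icc] at hy
    rw [(hasDerivAt_Af k y).deriv]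
    have hs := sin_pos' y ⟨hy.1, hy.2.le⟩
    have hc := cos_pos' y hy
    have hy3 : y^2 < 3 := by nlinarith [pi_lt_d6, hy.2, hy.1]
    nlinarith [mul_pos (mul_pos hk hs) (show (0:ℝ) < 3 - y^2 by linarith),
      mul_pos (mul_pos hk hy.1) hc]

lemma Af_lb {k : ℝ} (hk1 : 0.03 < k) (hk2 : k < 0.0301) :
    ∀ x ∈ Icc (0:ℝ) (π/2), 0.0496 < Af k x := by
  have hpi1 := pi_gt_d6
  have hpi2 := pi_lt_d6
  have hend : Af k (π/2) = 1/3 - 3*k*π := by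
    unfold Af
    rw [Real.cos_pi_div_two, Real.sin_pi_div_two]
    ring
  have hval : (0.0496:ℝ) < Af k (π/2) := by rw [hend]; nlinarith
  intro x hx
  rcases eq_or_lt_of_le hx.2 with h | h
  · rwa [h]
  · have := Af_anti (show (0:ℝ) < k by linarith) hx ⟨by linarith, le_rfl⟩ h
    linarith

lemma Df_anti {k : ℝ} (hk1 : 0.03 < k) (hk2 : k < 0.0301) :
    StrictAntiOn (Df k) (Ioc (0:ℝ) (π/2)) := by
  intro x hx y hy hxy
  unfold Df
  have hux := uf_pos x hx
  have huy := uf_pos y hy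
  have huxy : uf y < uf x := uf_anti hx hy hxy
  have hAx : 0 < Af k x := by linarith [Af_lb hk1 hk2 x ⟨hx.1.le, hx.2⟩]
  have hAy : 0 < Af k y := by linarith [Af_lb hk1 hk2 y ⟨hy.1.le, hy.2⟩]
  have hAxy : Af k y < Af k x := Af_anti (by linarith) ⟨hx.1.le, hx.2⟩ ⟨hy.1.le, hy.2⟩ hxy
  have hsx := sin_pos' x hx
  have hsy := sin_pos' y hy
  have hsxy : sin x < sin y := by
    have := Real.strictMonoOn_sin (a := x) (b := y) ⟨by linarith [pi_gt_d6, hx.1], hx.2⟩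
      ⟨by linarith [pi_gt_d6, hy.1], hy.2⟩ hxy
    exact this
  have hP : uf y * Af k y < uf x * Af k x := by nlinarith
  have hPy : 0 < uf y * Af k y := mul_pos huy hAy
  have h1 : uf y * Af k y / sin y ^ 2 < uf y * Af k y / sin x ^ 2 := by
    apply div_lt_div_of_pos_left hPy (by positivity)
    nlinarith
  have h2 : uf y * Af k y / sin x ^ 2 < uf x * Af k x / sin x ^ 2 := by
    gcongr
  linarith

lemma Df03_pos {k : ℝ} (hk1 : 0.03 < k) (hk2 : k < 0.0301) : 0 < Df k 0.3 := by
  have hs1 : (0.29325:ℝ) < sin 0.3 := by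
    have := Real.sin_gt_sub_cube (by norm_num : (0:ℝ) < 0.3)
    norm_num at this
    linarith
  have hs2 : sin (0.3:ℝ) < 0.3 := Real.sin_lt (by norm_num)
  have hc1 : cos (0.3:ℝ) < 0.95551 := by
    have h15 : (0.14915625:ℝ) < sin 0.15 := by
      have := Real.sin_gt_sub_cube (by norm_num : (0:ℝ) < 0.15)
      norm_num at this
      linarith
    have hcos : cos (0.3:ℝ) = 1 - 2*sin 0.15^2 := by
      rw [show (0.3:ℝ) = 2*0.15 by norm_num, Real.cos_two_mul, Real.cos_sq']
      ring
    rw [hcos]; nlinarith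
  have ht0 : (0.0065:ℝ) < sin 0.3 - 0.3*cos 0.3 := by nlinarith
  have hu : (0.24:ℝ) < uf 0.3 := by
    unfold uf
    rw [lt_div_iff₀ (by norm_num : (0:ℝ) < 0.3^3)]
    nlinarith
  have hA : (0.0496:ℝ) < Af k 0.3 :=
    Af_lb hk1 hk2 0.3 ⟨by norm_num, by nlinarith [pi_gt_d6]⟩
  have hP : (0.0119:ℝ) < uf 0.3 * Af k 0.3 := by nlinarith
  have hs2' : sin (0.3:ℝ) ^ 2 < 0.09 := by nlinarith
  have hss : (0:ℝ) < sin 0.3 := by linarith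
  have hq1 : uf 0.3 * Af k 0.3 / 0.09 < uf 0.3 * Af k 0.3 / sin 0.3^2 :=
    div_lt_div_of_pos_left (by linarith) (by positivity) hs2'
  have hq2 : (0.0119:ℝ)/0.09 < uf 0.3 * Af k 0.3 / 0.09 := by gcongr <;> norm_num
  have hnum : (0.132:ℝ) < (0.0119:ℝ)/0.09 := by norm_num
  unfold Df
  linarith

lemma Dfpi_neg {k : ℝ} (hk1 : 0.03 < k) (hk2 : k < 0.0301) : Df k (π/2) < 0 := by
  have hpi1 := pi_gt_d6
  have hpi2 := pi_lt_d6
  have hA : Af k (π/2) = 1/3 - 3*k*π := by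
    unfold Af
    rw [Real.cos_pi_div_two, Real.sin_pi_div_two]
    ring
  have hu : uf (π/2) = 1/(π/2)^3 := by
    unfold uf
    rw [Real.cos_pi_div_two, Real.sin_pi_div_two]
    ring_nf
  have hApos : 0 < Af k (π/2) := by rw [hA]; nlinarith
  have hAub : Af k (π/2) < 0.0506 := by rw [hA]; nlinarith
  have hcube : (3.8:ℝ) < (π/2)^3 := by
    have hy : (1.57:ℝ) < π/2 := by linarith
    nlinarith [hy, sq_nonneg (π/2 - 1.57), sq_nonneg (π/2)]
  unfold Df
  rw [hu, Real.sin_pi_div_two]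
  have h1 : 1/(π/2)^3 * Af k (π/2) / 1^2 = Af k (π/2) / (π/2)^3 := by
    field_simp
  rw [h1]
  have h2 : Af k (π/2) / (π/2)^3 < Af k (π/2) / 3.8 :=
    div_lt_div_of_pos_left hApos (by norm_num) hcube
  have h3 : Af k (π/2) / 3.8 < 0.0506/3.8 := by gcongr <;> norm_num
  have h4 : (0.0506:ℝ)/3.8 < 0.014 := by norm_num
  linarith

lemma sp_Vf2 {k : ℝ} (hk1 : 0.03 < k) (hk2 : k < 0.0301) :
    ∃ c, 0 < c ∧ c ≤ π/2 ∧ (∀ x ∈ Ioo 0 c, 0 < Vf2 k x) ∧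
      (∀ x ∈ Ioo c (π/2), Vf2 k x < 0) := by
  have hpi1 := pi_gt_d6
  have hpi2 := pi_lt_d6
  have hcont : ContinuousOn (Df k) (Icc 0.3 (π/2)) := by
    unfold Df
    apply ContinuousOn.sub _ continuousOn_const
    apply ContinuousOn.div
    · apply ContinuousOn.mul
      · unfold uf
        apply ContinuousOn.div
        · apply Continuous.continuousOn; fun_prop
        · apply Continuous.continuousOn; fun_prop
        · intro y hy; exact pow_ne_zero 3 (by linarith [hy.1] : (0:ℝ) < y).ne'
      · apply Continuous.continuousOn; unfold Af; fun_prop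
    · apply Continuous.continuousOn; fun_prop
    · intro y hy
      have : 0 < sin y := sin_pos_of_pos_of_lt_pi (by linarith [hy.1]) (by nlinarith [hy.2])
      positivity
  have hsub : Ioo (Df k (π/2)) (Df k 0.3) ⊆ Df k '' Ioo 0.3 (π/2) :=
    intermediate_value_Ioo' (by nlinarith) hcont
  obtain ⟨c, hc, hDc⟩ := hsub ⟨Dfpi_neg hk1 hk2, Df03_pos hk1 hk2⟩
  have hcmem : c ∈ Ioc (0:ℝ) (π/2) := ⟨by linarith [hc.1], hc.2.le⟩
  have hident : ∀ y ∈ Ioc (0:ℝ) (π/2), Vf2 k y = y^3 * sin y^2 * Df k y := by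
    intro y hy
    have hs : sin y ≠ 0 := (sin_pos' y hy).ne'
    have hy0 : y ≠ 0 := hy.1.ne'
    unfold Vf2 Df uf Af
    field_simp
  refine ⟨c, by linarith [hc.1], hc.2.le, ?_, ?_⟩
  · intro y hy
    have hymem : y ∈ Ioc (0:ℝ) (π/2) := ⟨hy.1, by linarith [hy.2, hc.2]⟩
    have hDy : 0 < Df k y := by
      have := Df_anti hk1 hk2 hymem hcmem hy.2
      rwa [hDc] at this
    rw [hident y hymem]
    have hs := sin_pos' y hymem
    exact mul_pos (mul_pos (pow_pos hy.1 3) (pow_pos hs 2)) hDy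
  · intro y hy
    have hymem : y ∈ Ioc (0:ℝ) (π/2) := ⟨by linarith [hy.1, hc.1], hy.2.le⟩
    have hDy : Df k y < 0 := by
      have := Df_anti hk1 hk2 hcmem hymem hy.1
      rwa [hDc] at this
    rw [hident y hymem]
    have hs := sin_pos' y hymem
    have h1 : 0 < y^3 * sin y^2 := mul_pos (pow_pos hymem.1 3) (pow_pos hs 2)
    exact mul_neg_of_pos_of_neg h1 hDy

lemma upper_bound (x : ℝ) (hx : 0 < x) (hx' : x < π / 2) :
    sin x / x < (2 + cos x) / 3 - (2 / 3 - 2 / π) * (sin x - x * cos x) ^ 2 := by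
  have hpi1 := pi_gt_d6
  have hpi2 := pi_lt_d6
  set k : ℝ := 2/3 - 2/π with hk_def
  obtain ⟨hk1, hk2⟩ := k_bounds
  rw [← hk_def] at hk1 hk2
  have hk1' : (0.03:ℝ) < k := by norm_num at hk1 ⊢; linarith
  obtain ⟨c, hc0, hca, hc1, hc2⟩ := sp_Vf2 hk1' hk2
  have hder1 : ∀ y ∈ Ioo (0:ℝ) (π/2), deriv (Vf1 k) y = Vf2 k y :=
    fun y _ => (hasDerivAt_Vf1 k y).deriv
  have hcont1 : ContinuousOn (Vf1 k) (Icc 0 (π/2)) := by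
    apply Continuous.continuousOn; unfold Vf1; fun_prop
  have h10 : Vf1 k 0 = 0 := by unfold Vf1; simp
  have h1a : Vf1 k (π/2) < 0 := by
    unfold Vf1
    rw [Real.cos_pi_div_two, Real.sin_pi_div_two]
    have hpisq : (9.8696:ℝ) < π^2 := by nlinarith
    nlinarith
  obtain ⟨d, hd0, hda, hd1', hd2'⟩ := sp_step hc0 hca hcont1 h10 h1a hder1 hc1 hc2
  have hder0 : ∀ y ∈ Ioo (0:ℝ) (π/2), deriv (Vf k) y = Vf1 k y :=
    fun y _ => (hasDerivAt_Vf k y).deriv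
  have hcont0 : ContinuousOn (Vf k) (Icc 0 (π/2)) := by
    apply Continuous.continuousOn; unfold Vf; fun_prop
  have h00 : Vf k 0 = 0 := by unfold Vf; simp
  have h0a : Vf k (π/2) = 0 := by
    unfold Vf
    rw [Real.cos_pi_div_two, Real.sin_pi_div_two, hk_def]
    have h1 : π ≠ 0 := by positivity
    field_simp
    ring
  have hup : ∀ y ∈ Ioo (0:ℝ) d, 0 < deriv (Vf k) y := by
    intro y hy
    rw [hder0 y ⟨hy.1, lt_of_lt_of_le hy.2 hda⟩]
    exact hd1' y hy
  have hdn : ∀ y ∈ Ioo d (π/2), deriv (Vf k) y < 0 := by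
    intro y hy
    rw [hder0 y ⟨hd0.trans hy.1, hy.2⟩]
    exact hd2' y hy
  have hpos := updown_pos hd0 hda hcont0 h00 (le_of_eq h0a.symm) hup hdn x ⟨hx, hx'⟩
  have hxne : x ≠ 0 := hx.ne'
  have key : (2 + cos x) / 3 - k * (sin x - x * cos x) ^ 2 - sin x / x
      = Vf k x / x := by
    rw [hk_def]; unfold Vf
    field_simp
  have hq : 0 < Vf k x / x := div_pos hpos hx
  linarith [key ▸ hq]

theorem best_of_theorems (x : ℝ) (hx : 0 < x) (hx' : x < π / 2) :
    (2 + cos x) / 3 - (2 / 3 - 2 / π) * ((π / 2 - 1)⁻¹ * (x - sin x)) < sin x / x ∧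
    sin x / x < (2 + cos x) / 3 - (2 / 3 - 2 / π) * (sin x - x * cos x) ^ 2 :=
  ⟨lower_bound x hx hx', upper_bound x hx hx'⟩
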